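/- Let A be an indecomposable GCM of finite type. Then for every Z ∈ T_{ℝ,reg} there is a unique element w ∈ W such that (w·Z)(α_i) < 0 for all i = 1,…,n. -/

import Mathlib

open scoped BigOperators

noncomputable section

namespace KacMoodyStab

variable {ι : Type*} [Fintype ι] [DecidableEq ι]

/-- A symmetric generalized Cartan matrix: symmetric, `2` on the diagonal,
non-positive integers off the diagonal. -/
def IsGCM (A : Matrix ι ι ℤ) : Prop :=
  A.IsSymm ∧ (∀ i, A i i = 2) ∧ ∀ i j, i ≠ j → A i j ≤ 0

/-- The simple root `α i` in the root lattice `L = ι → ℤ`. -/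
def sroot (i : ι) : ι → ℤ := Pi.single i 1

/-- The symmetric bilinear form `(x, y) = ∑ i j, x i * A i j * y j` on the root lattice. -/
def bform (A : Matrix ι ι ℤ) (x y : ι → ℤ) : ℤ := ∑ i, ∑ j, x i * A i j * y j

/-- The linear functional `λ ↦ (λ, α i)`. -/
def corootFn (A : Matrix ι ι ℤ) (i : ι) : (ι → ℤ) →ₗ[ℤ] ℤ where
  toFun x := ∑ j, x j * A j i
  map_add' x y := by simp [add_mul, Finset.sum_add_distrib]
  map_smul' c x := by simp [Finset.mul_sum, mul_assoc]

lemma corootFn_sroot (A : Matrix ι ι ℤ) (hA : IsGCM A) (i : ι) :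
    corootFn A i (sroot i) = 2 := by
  have h : ∀ j, (sroot i) j * A j i = if j = i then A j i else 0 := by
    intro j
    by_cases h : j = i <;> simp [sroot, Pi.single_apply, h]
  have : corootFn A i (sroot i) = ∑ j, (sroot i) j * A j i := rfl
  rw [this]
  simp [h, hA.2.1 i]

/-- The simple reflection `r i : λ ↦ λ - (λ, α i) α i` as a `ℤ`-linear automorphism
of the root lattice. -/
def srefl (A : Matrix ι ι ℤ) (hA : IsGCM A) (i : ι) : (ι → ℤ) ≃ₗ[ℤ] (ι → ℤ) :=
  Module.reflection (corootFn_sroot A hA i)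

/-- The Weyl group, the subgroup of automorphisms of the root lattice generated by the
simple reflections. -/
def weylGroup (A : Matrix ι ι ℤ) (hA : IsGCM A) : Subgroup ((ι → ℤ) ≃ₗ[ℤ] (ι → ℤ)) :=
  Subgroup.closure (Set.range (srefl A hA))

/-- The set of real roots: the orbit of the simple roots under the Weyl group. -/
def realRoots (A : Matrix ι ι ℤ) (hA : IsGCM A) : Set (ι → ℤ) :=
  {α | ∃ w ∈ weylGroup A hA, ∃ i, α = w (sroot i)}

/-- The set of positive real roots. -/
def posRealRoots (A : Matrix ι ι ℤ) (hA : IsGCM A) : Set (ι → ℤ) :=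
  realRoots A hA ∩ {α | ∀ i, 0 ≤ α i}

/-- The Dynkin diagram of a (symmetric) GCM: distinct `i`, `j` are adjacent
iff `A i j < 0`. -/
def dynkin (A : Matrix ι ι ℤ) : SimpleGraph ι where
  Adj i j := i ≠ j ∧ (A i j < 0 ∨ A j i < 0)
  symm := ⟨fun i j h => ⟨h.1.symm, h.2.symm⟩⟩
  loopless := ⟨fun i h => h.1 rfl⟩

/-- The fundamental set `K` of positive imaginary roots: non-zero, non-negative,
connected support, and `(α, α i) ≤ 0` for all `i`. -/
def fundamentalSet (A : Matrix ι ι ℤ) : Set (ι → ℤ) :=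
  {α | (∀ i, 0 ≤ α i) ∧ α ≠ 0 ∧
    ((dynkin A).induce {i | α i ≠ 0}).Connected ∧
    ∀ i, bform A α (sroot i) ≤ 0}

/-- The set of positive imaginary roots: the orbit of the fundamental set under the
Weyl group. -/
def posImRoots (A : Matrix ι ι ℤ) (hA : IsGCM A) : Set (ι → ℤ) :=
  {β | ∃ w ∈ weylGroup A hA, ∃ α ∈ fundamentalSet A, β = w α}

/-- The set of all roots `Δ = Δ^re ∪ Δ^im`. -/
def allRoots (A : Matrix ι ι ℤ) (hA : IsGCM A) : Set (ι → ℤ) :=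
  realRoots A hA ∪ (posImRoots A hA ∪ {α | -α ∈ posImRoots A hA})

/-- The canonical embedding of the root lattice into `V*_ℝ = L ⊗ ℝ = ι → ℝ`. -/
def castR (α : ι → ℤ) : ι → ℝ := fun i => (α i : ℝ)

/-- The imaginary cone: the closure of the convex hull of `Δ^im_+ ∪ {0}` in `V*_ℝ`. -/
def imCone (A : Matrix ι ι ℤ) (hA : IsGCM A) : Set (ι → ℝ) :=
  closure (convexHull ℝ (insert 0 (castR '' posImRoots A hA)))

/-- The pairing of `Z ∈ V = Hom_ℤ(L, ℂ)` (recorded by its values `Z i = Z(α i)`)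
with an element of `V*_ℝ`, via the `ℝ`-linear extension of `Z`. -/
def pairC (Z : ι → ℂ) (l : ι → ℝ) : ℂ := ∑ i, Z i * (l i : ℂ)

/-- The pairing of `Z ∈ V = Hom_ℤ(L, ℂ)` with an element of the root lattice. -/
def pairCZ (Z : ι → ℂ) (α : ι → ℤ) : ℂ := ∑ i, Z i * (α i : ℂ)

/-- The pairing of `Z ∈ V_ℝ = Hom_ℤ(L, ℝ)` with an element of `V*_ℝ`. -/
def pairR (Z : ι → ℝ) (l : ι → ℝ) : ℝ := ∑ i, Z i * l i

/-- The set `X = V \ ∪_{λ ∈ I₀} H_λ`. -/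
def Xset (A : Matrix ι ι ℤ) (hA : IsGCM A) : Set (ι → ℂ) :=
  {Z | ∀ l ∈ imCone A hA \ {0}, pairC Z l ≠ 0}

/-- The regular subset `Xreg = X \ ∪_{α ∈ Δ^re_+} H_α`. -/
def Xreg (A : Matrix ι ι ℤ) (hA : IsGCM A) : Set (ι → ℂ) :=
  Xset A hA ∩ {Z | ∀ α ∈ posRealRoots A hA, pairCZ Z α ≠ 0}

/-- The sector `{r e^{iπφ} : r > 0, φ₁ ≤ φ ≤ φ₂}` in `ℂ`. -/
def sector (φ₁ φ₂ : ℝ) : Set ℂ :=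
  {z | ∃ r : ℝ, 0 < r ∧ ∃ φ : ℝ, φ₁ ≤ φ ∧ φ ≤ φ₂ ∧
    z = (r : ℂ) * Complex.exp (Real.pi * φ * Complex.I)}

/-- The contragredient action of a lattice automorphism `w` on `V = Hom_ℤ(L, ℂ)`:
`(w·Z)(α i) = Z(w⁻¹ α i)`. -/
def actC (w : (ι → ℤ) ≃ₗ[ℤ] (ι → ℤ)) (Z : ι → ℂ) : ι → ℂ :=
  fun i => ∑ j, Z j * ((w.symm (sroot i)) j : ℂ)

/-- The contragredient action of a lattice automorphism `w` on `V_ℝ = Hom_ℤ(L, ℝ)`: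
`(w·Z)(α i) = Z(w⁻¹ α i)`. -/
def actR (w : (ι → ℤ) ≃ₗ[ℤ] (ι → ℤ)) (Z : ι → ℝ) : ι → ℝ :=
  fun i => ∑ j, Z j * ((w.symm (sroot i)) j : ℝ)

/-- The `ℝ`-linear extension of a lattice automorphism `w` to `V*_ℝ = L ⊗ ℝ`. -/
def extR (w : (ι → ℤ) ≃ₗ[ℤ] (ι → ℤ)) (l : ι → ℝ) : ι → ℝ :=
  fun i => ∑ j, ((w (sroot j)) i : ℝ) * l j

/-- Finite type for a GCM (Kac's condition (Fin)). -/
def IsFiniteType (A : Matrix ι ι ℤ) : Prop :=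
  A.det ≠ 0 ∧
  (∃ u : ι → ℝ, (∀ i, 0 < u i) ∧ ∀ i, 0 < (A.map (Int.cast : ℤ → ℝ)).mulVec u i) ∧
  ∀ u : ι → ℝ, (∀ i, 0 ≤ (A.map (Int.cast : ℤ → ℝ)).mulVec u i) →
    (∀ i, 0 < u i) ∨ u = 0

/-- The (open) Weyl chamber `C_ℝ` in `V_ℝ`. -/
def weylChamber : Set (ι → ℝ) := {Z | ∀ i, 0 < Z i}

/-- The closed Weyl chamber in `V_ℝ`. -/
def weylChamberCl : Set (ι → ℝ) := {Z | ∀ i, 0 ≤ Z i}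

/-- The Tits cone `T_ℝ = ∪_{w ∈ W} w(C̄_ℝ)`. -/
def titsCone (A : Matrix ι ι ℤ) (hA : IsGCM A) : Set (ι → ℝ) :=
  ⋃ w ∈ weylGroup A hA, actR w '' (weylChamberCl (ι := ι))

/-- The regular part of the Tits cone `T_{ℝ,reg} = ∪_{w ∈ W} w(C_ℝ)`. -/
def titsConeReg (A : Matrix ι ι ℤ) (hA : IsGCM A) : Set (ι → ℝ) :=
  ⋃ w ∈ weylGroup A hA, actR w '' (weylChamber (ι := ι))

/-- The normalized regular subset `Xreg^N = {Z ∈ Xreg : φ^I(Z) = 1/2}`: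
the image `Z(I₀)` is a sector `{r e^{iπφ} : r > 0, φ₁ ≤ φ ≤ φ₂}` with
`φ₂ - φ₁ < 1` and midpoint `(φ₁ + φ₂)/2 = 1/2`. -/
def XregN (A : Matrix ι ι ℤ) (hA : IsGCM A) : Set (ι → ℂ) :=
  {Z | Z ∈ Xreg A hA ∧ ∃ φ₁ φ₂ : ℝ, φ₁ ≤ φ₂ ∧ φ₂ - φ₁ < 1 ∧ φ₁ + φ₂ = 1 ∧
    pairC Z '' (imCone A hA \ {0}) = sector φ₁ φ₂}

/-- The semi-closed upper half-plane `H = ℍ ∪ ℝ_{<0}`. -/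
def semiClosedH : Set ℂ := {z | 0 < z.im} ∪ {z | z.im = 0 ∧ z.re < 0}

/-- The normalized complexified Weyl chamber
`C^N = {Z ∈ Xreg^N : Z(α i) ∈ H for all i}`. -/
def CN (A : Matrix ι ι ℤ) (hA : IsGCM A) : Set (ι → ℂ) :=
  {Z | Z ∈ XregN A hA ∧ ∀ i, Z i ∈ semiClosedH}

/-- The regular subset of the complexified Tits cone:
`T_reg = {Z ∈ Xreg : Z(I₀) ⊆ ℍ}`. -/
def Treg (A : Matrix ι ι ℤ) (hA : IsGCM A) : Set (ι → ℂ) :=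
  {Z | Z ∈ Xreg A hA ∧ ∀ l ∈ imCone A hA \ {0}, 0 < (pairC Z l).im}

open Classical in
/-- The phase `φ^I(Z)` of the imaginary cone with respect to `Z`, normalized by its
representative with `0 < φ₁`, `φ₂ < 1` (which exists and is unique when `Z(I₀) ⊆ ℍ`). -/
def phaseI (A : Matrix ι ι ℤ) (hA : IsGCM A) (Z : ι → ℂ) : ℝ :=
  if h : ∃ p : ℝ × ℝ, p.1 ≤ p.2 ∧ p.2 - p.1 < 1 ∧ 0 < p.1 ∧ p.2 < 1 ∧
      pairC Z '' (imCone A hA \ {0}) = sector p.1 p.2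
  then (h.choose.1 + h.choose.2) / 2 else 0

/-- The retraction `h_t(Z) = e^{iπt(1/2 - φ^I(Z))} · Z`. -/
def hRetract (A : Matrix ι ι ℤ) (hA : IsGCM A) (t : ℝ) (Z : ι → ℂ) : ι → ℂ :=
  Complex.exp (Real.pi * t * (1 / 2 - phaseI A hA Z) * Complex.I) • Z

/-- The wall `W_{i,+}`. -/
def wallPlus (A : Matrix ι ι ℤ) (hA : IsGCM A) (i : ι) : Set (ι → ℂ) :=
  {Z | Z ∈ XregN A hA ∧ ((Z i).im = 0 ∧ 0 < (Z i).re) ∧ ∀ j, j ≠ i → 0 < (Z j).im}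

/-- The wall `W_{i,-}`. -/
def wallMinus (A : Matrix ι ι ℤ) (hA : IsGCM A) (i : ι) : Set (ι → ℂ) :=
  {Z | Z ∈ XregN A hA ∧ ((Z i).im = 0 ∧ (Z i).re < 0) ∧ ∀ j, j ≠ i → 0 < (Z j).im}

/-- The defining relations of the Artin group attached to a symmetric GCM:
`σ i σ j = σ j σ i` if `a i j = 0` and `σ i σ j σ i = σ j σ i σ j` if `a i j = -1`. -/
def artinRels (A : Matrix ι ι ℤ) : Set (FreeGroup ι) :=
  {r | ∃ i j : ι,
    (A i j = 0 ∧ r = FreeGroup.of i * FreeGroup.of j *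
      (FreeGroup.of j * FreeGroup.of i)⁻¹) ∨
    (A i j = -1 ∧ r = FreeGroup.of i * FreeGroup.of j * FreeGroup.of i *
      (FreeGroup.of j * FreeGroup.of i * FreeGroup.of j)⁻¹)}

/-- The Artin group attached to a symmetric GCM. -/
def ArtinGroup (A : Matrix ι ι ℤ) := PresentedGroup (artinRels A)

instance (A : Matrix ι ι ℤ) : Group (ArtinGroup A) :=
  inferInstanceAs (Group (PresentedGroup (artinRels A)))

lemma IsGCM.submatrix {κ : Type*} [Fintype κ] [DecidableEq κ] {A : Matrix ι ι ℤ}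
    (hA : IsGCM A) (f : κ → ι) (hf : Function.Injective f) :
    IsGCM (A.submatrix f f) :=
  ⟨hA.1.submatrix f, fun i => hA.2.1 (f i),
    fun i j hij => hA.2.2 _ _ fun h => hij (hf h)⟩

section Aux
set_option linter.unusedSectionVars false

variable (A : Matrix ι ι ℤ)

lemma bform_comm (hA : IsGCM A) (x y : ι → ℤ) : bform A x y = bform A y x := by
  rw [bform, bform, Finset.sum_comm]
  refine Finset.sum_congr rfl fun i _ => Finset.sum_congr rfl fun j _ => ?_
  rw [show A j i = A i j from hA.1.apply i j]; ring

lemma bform_add_right (x y z : ι → ℤ) :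
    bform A x (y + z) = bform A x y + bform A x z := by
  simp [bform, mul_add, Finset.sum_add_distrib]

lemma bform_smul_right (c : ℤ) (x y : ι → ℤ) :
    bform A x (c • y) = c * bform A x y := by
  simp [bform, Finset.mul_sum]; refine Finset.sum_congr rfl fun i _ => Finset.sum_congr rfl fun j _ => ?_; ring

lemma bform_neg_right (x y : ι → ℤ) : bform A x (-y) = - bform A x y := by
  simp [bform, Finset.sum_neg_distrib]

lemma bform_sub_right (x y z : ι → ℤ) :
    bform A x (y - z) = bform A x y - bform A x z := by
  rw [sub_eq_add_neg, bform_add_right, bform_neg_right A]; ring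

lemma bform_sroot_right (x : ι → ℤ) (i : ι) :
    bform A x (sroot i) = corootFn A i x := by
  show _ = ∑ j, x j * A j i
  rw [bform]
  refine Finset.sum_congr rfl fun k _ => ?_
  rw [Finset.sum_eq_single i]
  · simp [sroot]
  · intro b _ hb; simp [sroot, Pi.single_apply, hb]
  · simp

lemma bform_sroot_sroot (i j : ι) : bform A (sroot i) (sroot j) = A i j := by
  rw [bform_sroot_right]
  show (∑ k, (sroot i) k * A k j) = A i j
  rw [Finset.sum_eq_single i]
  · simp [sroot]
  · intro b _ hb; simp [sroot, Pi.single_apply, hb]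
  · simp

lemma bform_smul_left (hA : IsGCM A) (c : ℤ) (x y : ι → ℤ) :
    bform A (c • x) y = c * bform A x y := by
  rw [bform_comm A hA, bform_smul_right, bform_comm A hA]

lemma bform_sub_left (hA : IsGCM A) (x y z : ι → ℤ) :
    bform A (x - y) z = bform A x z - bform A y z := by
  rw [bform_comm A hA, bform_sub_right, bform_comm A hA, bform_comm A hA y]

lemma srefl_apply (hA : IsGCM A) (i : ι) (x : ι → ℤ) :
    srefl A hA i x = x - bform A x (sroot i) • sroot i := by
  rw [bform_sroot_right]; exact Module.reflection_apply _ _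

lemma srefl_bform (hA : IsGCM A) (i : ι) (x y : ι → ℤ) :
    bform A (srefl A hA i x) (srefl A hA i y) = bform A x y := by
  rw [srefl_apply, srefl_apply]
  simp only [bform_sub_left A hA, bform_sub_right, bform_smul_left A hA, bform_smul_right,
    bform_sroot_sroot, hA.2.1 i]
  rw [bform_comm A hA (sroot i) y]
  ring

lemma srefl_mem (hA : IsGCM A) (i : ι) : srefl A hA i ∈ weylGroup A hA :=
  Subgroup.subset_closure ⟨i, rfl⟩

lemma weyl_bform (hA : IsGCM A) {w : (ι → ℤ) ≃ₗ[ℤ] (ι → ℤ)} (hw : w ∈ weylGroup A hA) :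
    ∀ x y, bform A (w x) (w y) = bform A x y := by
  induction hw using Subgroup.closure_induction with
  | mem g hg => obtain ⟨i, rfl⟩ := hg; exact srefl_bform A hA i
  | one => intro x y; rfl
  | mul a b _ _ iha ihb =>
      intro x y
      have : ∀ z, (a * b) z = a (b z) := fun _ => rfl
      rw [this, this, iha, ihb]
  | inv a _ iha =>
      intro x y
      have := iha (a⁻¹ x) (a⁻¹ y)
      rw [show a (a⁻¹ x) = x from a.apply_symm_apply x,
        show a (a⁻¹ y) = y from a.apply_symm_apply y] at this
      exact this.symm

/-- The coroot functional attached to an arbitrary vector. -/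
def corB (hA : IsGCM A) (β : ι → ℤ) : (ι → ℤ) →ₗ[ℤ] ℤ where
  toFun x := bform A x β
  map_add' x y := by
    show bform A (x + y) β = bform A x β + bform A y β
    rw [bform_comm A hA, bform_add_right, bform_comm A hA β x, bform_comm A hA β y]
  map_smul' c x := by
    show bform A (c • x) β = c • bform A x β
    rw [bform_smul_left A hA]; rfl

/-- Reflection along a norm-2 vector. -/
def rroot (hA : IsGCM A) (β : ι → ℤ) (h2 : bform A β β = 2) : (ι → ℤ) ≃ₗ[ℤ] (ι → ℤ) :=
  Module.reflection (show corB A hA β β = 2 from h2)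

lemma rroot_apply (hA : IsGCM A) (β : ι → ℤ) (h2 : bform A β β = 2) (x : ι → ℤ) :
    rroot A hA β h2 x = x - bform A x β • β :=
  Module.reflection_apply _ _

private lemma reflection_congr {f g : (ι → ℤ) →ₗ[ℤ] ℤ} {y : ι → ℤ} (hf : f y = 2)
    (hfg : f = g) : Module.reflection hf = Module.reflection (hfg ▸ hf) := by
  cases hfg; rfl

lemma srefl_eq_rroot (hA : IsGCM A) (i : ι) :
    srefl A hA i = rroot A hA (sroot i)
      (by rw [bform_sroot_sroot]; exact hA.2.1 i) := by
  have hfg : corootFn A i = corB A hA (sroot i) := by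
    apply LinearMap.ext; intro x; exact (bform_sroot_right A x i).symm
  exact reflection_congr (corootFn_sroot A hA i) hfg

lemma rroot_conj (hA : IsGCM A) {w : (ι → ℤ) ≃ₗ[ℤ] (ι → ℤ)} (hw : w ∈ weylGroup A hA)
    (β : ι → ℤ) (h2 : bform A β β = 2) :
    w * rroot A hA β h2 * w⁻¹ =
      rroot A hA (w β) (by rw [weyl_bform A hA hw]; exact h2) := by
  apply LinearEquiv.toLinearMap_injective
  apply LinearMap.ext
  intro x
  have h1 : (w * rroot A hA β h2 * w⁻¹) x = w (rroot A hA β h2 (w.symm x)) := rfl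
  have h2' : bform A (w.symm x) β = bform A x (w β) := by
    have := weyl_bform A hA hw (w.symm x) β
    rw [w.apply_symm_apply] at this
    exact this.symm
  show (w * rroot A hA β h2 * w⁻¹) x = rroot A hA (w β) _ x
  rw [h1, rroot_apply, rroot_apply, map_sub, map_smul, h2', w.apply_symm_apply]

/-- Product of a list of simple reflections. -/
def prodW (hA : IsGCM A) (l : List ι) : (ι → ℤ) ≃ₗ[ℤ] (ι → ℤ) :=
  (l.map (srefl A hA)).prod

lemma prodW_nil (hA : IsGCM A) : prodW A hA [] = 1 := rfl

lemma prodW_cons (hA : IsGCM A) (i : ι) (l : List ι) :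
    prodW A hA (i :: l) = srefl A hA i * prodW A hA l := by
  simp [prodW]

lemma prodW_mem (hA : IsGCM A) (l : List ι) : prodW A hA l ∈ weylGroup A hA := by
  induction l with
  | nil => exact (weylGroup A hA).one_mem
  | cons i l ih => rw [prodW_cons]; exact (weylGroup A hA).mul_mem (srefl_mem A hA i) ih

lemma srefl_mul_self (hA : IsGCM A) (i : ι) : srefl A hA i * srefl A hA i = 1 := by
  apply LinearEquiv.toLinearMap_injective
  apply LinearMap.ext
  intro x
  show srefl A hA i (srefl A hA i x) = x
  exact Module.involutive_reflection (corootFn_sroot A hA i) x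

lemma srefl_inv (hA : IsGCM A) (i : ι) : (srefl A hA i)⁻¹ = srefl A hA i :=
  inv_eq_of_mul_eq_one_right (srefl_mul_self A hA i)

lemma prodW_reverse (hA : IsGCM A) (l : List ι) :
    prodW A hA l.reverse = (prodW A hA l)⁻¹ := by
  induction l with
  | nil => simp [prodW_nil]
  | cons i l ih =>
      rw [prodW_cons, List.reverse_cons, mul_inv_rev, srefl_inv, ← ih]
      simp only [prodW, List.map_append, List.prod_append, List.map_cons, List.map_nil,
        List.prod_cons, List.prod_nil, mul_one]

lemma mem_weylGroup_iff_list (hA : IsGCM A) (w : (ι → ℤ) ≃ₗ[ℤ] (ι → ℤ)) :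
    w ∈ weylGroup A hA ↔ ∃ l : List ι, prodW A hA l = w := by
  constructor
  · intro hw
    induction hw using Subgroup.closure_induction with
    | mem g hg => obtain ⟨i, rfl⟩ := hg; exact ⟨[i], by rw [prodW_cons, prodW_nil, mul_one]⟩
    | one => exact ⟨[], rfl⟩
    | mul a b _ _ iha ihb =>
        obtain ⟨la, rfl⟩ := iha; obtain ⟨lb, rfl⟩ := ihb
        exact ⟨la ++ lb, by simp [prodW]⟩
    | inv a _ iha =>
        obtain ⟨la, rfl⟩ := iha
        exact ⟨la.reverse, prodW_reverse A hA la⟩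
  · rintro ⟨l, rfl⟩; exact prodW_mem A hA l


/-- Real quadratic form of `A`. -/
def qf (x : ι → ℝ) : ℝ := ∑ i, ∑ j, x i * (A i j : ℝ) * x j

/-- Real bilinear form of `A`. -/
def blR (x y : ι → ℝ) : ℝ := ∑ i, ∑ j, x i * (A i j : ℝ) * y j

lemma qf_cast (β : ι → ℤ) : ((bform A β β : ℤ) : ℝ) = qf A (fun i => (β i : ℝ)) := by
  unfold bform qf
  push_cast
  rfl

lemma qf_continuous : Continuous (qf A) := by
  unfold qf
  refine continuous_finset_sum _ fun i _ => continuous_finset_sum _ fun j _ => ?_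
  exact ((continuous_apply i).mul continuous_const).mul (continuous_apply j)

lemma qf_smul (c : ℝ) (x : ι → ℝ) : qf A (c • x) = c ^ 2 * qf A x := by
  unfold qf
  simp only [Finset.mul_sum]
  refine Finset.sum_congr rfl fun i _ => Finset.sum_congr rfl fun j _ => ?_
  simp only [Pi.smul_apply, smul_eq_mul]; ring

lemma qf_expand (y u : ι → ℝ) (t : ℝ) :
    qf A (y + t • u) = qf A y + t * (blR A y u + blR A u y) + t ^ 2 * qf A u := by
  unfold qf blR
  simp only [Finset.mul_sum, ← Finset.sum_add_distrib]
  refine Finset.sum_congr rfl fun i _ => Finset.sum_congr rfl fun j _ => ?_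
  simp only [Pi.add_apply, Pi.smul_apply, smul_eq_mul]; ring

lemma sq_sum_expand (y u : ι → ℝ) (t : ℝ) :
    ∑ i, (y + t • u) i ^ 2 = ∑ i, y i ^ 2 + t * (2 * ∑ i, y i * u i) + t ^ 2 * ∑ i, u i ^ 2 := by
  simp only [Finset.mul_sum, ← Finset.sum_add_distrib]
  refine Finset.sum_congr rfl fun i _ => ?_
  simp only [Pi.add_apply, Pi.smul_apply, smul_eq_mul]; ring

private lemma quad_aux {a b : ℝ} (ha : 0 ≤ a) (h : ∀ t : ℝ, 0 ≤ t * b + t ^ 2 * a) :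
    b = 0 := by
  rcases eq_or_lt_of_le ha with ha0 | hapos
  · have h1 := h (-b)
    rw [← ha0] at h1
    nlinarith [sq_nonneg b]
  · have h1 := h (-b / (2 * a))
    rw [div_mul_eq_mul_div, div_pow] at h1
    have heq : -b * b / (2 * a) + (-b) ^ 2 / (2 * a) ^ 2 * a = -(b ^ 2) / (4 * a) := by
      field_simp
      ring
    rw [heq] at h1
    have h5 := mul_nonneg h1 (le_of_lt (by linarith : (0:ℝ) < 4 * a))
    rw [div_mul_cancel₀] at h5
    · have hb2 : b ^ 2 = 0 := le_antisymm (by linarith) (sq_nonneg b)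
      exact pow_eq_zero_iff (by norm_num) |>.mp hb2
    · intro h0; linarith

lemma posdef_bound [Nonempty ι] (hA : IsGCM A) (u : ι → ℝ) (hu : ∀ i, 0 < u i)
    (hMu : ∀ i, 0 < ∑ j, (A i j : ℝ) * u j) :
    ∃ c : ℝ, 0 < c ∧ ∀ x : ι → ℝ, c * ∑ i, x i ^ 2 ≤ qf A x := by
  classical
  set S : Set (ι → ℝ) := {x | ∑ i, x i ^ 2 = 1} with hS
  have hclosed : IsClosed S :=
    isClosed_eq (continuous_finset_sum _ fun i _ => (continuous_apply i).pow 2) continuous_const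
  have hbdd : Bornology.IsBounded S := by
    refine (Metric.isBounded_closedBall (x := (0 : ι → ℝ)) (r := 1)).subset ?_
    intro x hx
    have hx1 : ∑ i, x i ^ 2 = 1 := hx
    rw [Metric.mem_closedBall, dist_zero_right]
    rw [pi_norm_le_iff_of_nonneg zero_le_one]
    intro i
    have h1 : x i ^ 2 ≤ 1 := by
      calc x i ^ 2 ≤ ∑ i, x i ^ 2 :=
        Finset.single_le_sum (fun j _ => sq_nonneg (x j)) (Finset.mem_univ i)
      _ = 1 := hx1
    rw [Real.norm_eq_abs]
    nlinarith [abs_nonneg (x i), sq_abs (x i)]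
  have hSc : IsCompact S := Metric.isCompact_of_isClosed_isBounded hclosed hbdd
  have hSne : S.Nonempty := by
    obtain ⟨i0⟩ := ‹Nonempty ι›
    have hmem : (∑ i, (Pi.single i0 (1:ℝ) : ι → ℝ) i ^ 2) = 1 := by
      rw [Finset.sum_eq_single i0]
      · simp
      · intro b _ hb; simp [Pi.single_apply, hb]
      · simp
    exact ⟨(Pi.single i0 (1:ℝ) : ι → ℝ), hmem⟩
  obtain ⟨x₀, hx₀S, hmin⟩ := hSc.exists_isMinOn hSne (qf_continuous A).continuousOn
  set c := qf A x₀ with hc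
  have hmin' : ∀ y ∈ S, c ≤ qf A y := fun y hy => hmin hy
  have hscale : ∀ x : ι → ℝ, c * ∑ i, x i ^ 2 ≤ qf A x := by
    intro x
    by_cases hx0 : x = 0
    · subst hx0; simp [qf]
    · have hs : 0 < ∑ i, x i ^ 2 := by
        have : ∃ i, x i ≠ 0 := by
          by_contra h
          push_neg at h
          exact hx0 (funext h)
        obtain ⟨i, hi⟩ := this
        refine Finset.sum_pos' (fun j _ => sq_nonneg (x j)) ⟨i, Finset.mem_univ i, ?_⟩
        positivity
      set r := Real.sqrt (∑ i, x i ^ 2) with hr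
      have hrpos : 0 < r := Real.sqrt_pos.2 hs
      have hr2 : r ^ 2 = ∑ i, x i ^ 2 := Real.sq_sqrt hs.le
      have hy : (r⁻¹ • x) ∈ S := by
        show ∑ i, (r⁻¹ • x) i ^ 2 = 1
        have : ∑ i, (r⁻¹ • x) i ^ 2 = r⁻¹ ^ 2 * ∑ i, x i ^ 2 := by
          simp only [Finset.mul_sum]
          refine Finset.sum_congr rfl fun i _ => ?_
          simp only [Pi.smul_apply, smul_eq_mul]; ring
        rw [this, ← hr2]
        field_simp
      have h1 := hmin' _ hy
      have h2 : qf A (r⁻¹ • x) = r⁻¹ ^ 2 * qf A x := qf_smul A _ _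
      rw [h2] at h1
      have h3 : c * r ^ 2 ≤ r ^ 2 * (r⁻¹ ^ 2 * qf A x) := by
        rw [mul_comm c (r^2)]
        exact mul_le_mul_of_nonneg_left h1 (sq_nonneg r)
      have h4 : r ^ 2 * (r⁻¹ ^ 2 * qf A x) = qf A x := by
        field_simp
      rw [h4, hr2] at h3
      exact h3
  refine ⟨c, ?_, hscale⟩
  by_contra hcle
  push_neg at hcle
  -- replace x₀ by its componentwise absolute value
  set y₀ : ι → ℝ := fun i => |x₀ i| with hy₀
  have hy₀S : y₀ ∈ S := by
    show ∑ i, y₀ i ^ 2 = 1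
    have : ∀ i, y₀ i ^ 2 = x₀ i ^ 2 := fun i => sq_abs (x₀ i)
    rw [Finset.sum_congr rfl fun i _ => this i]
    exact hx₀S
  have hy₀le : qf A y₀ ≤ qf A x₀ := by
    unfold qf
    refine Finset.sum_le_sum fun i _ => Finset.sum_le_sum fun j _ => ?_
    by_cases hij : i = j
    · subst hij
      have : y₀ i * (A i i : ℝ) * y₀ i = x₀ i * (A i i : ℝ) * x₀ i := by
        show |x₀ i| * (A i i : ℝ) * |x₀ i| = _
        calc |x₀ i| * (A i i : ℝ) * |x₀ i| = (A i i : ℝ) * |x₀ i| ^ 2 := by ring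
        _ = (A i i : ℝ) * x₀ i ^ 2 := by rw [sq_abs]
        _ = x₀ i * (A i i : ℝ) * x₀ i := by ring
      exact le_of_eq this
    · have hAij : (A i j : ℝ) ≤ 0 := by
        have := hA.2.2 i j hij
        exact_mod_cast this
      have habs : x₀ i * x₀ j ≤ y₀ i * y₀ j := by
        show _ ≤ |x₀ i| * |x₀ j|
        rw [← abs_mul]
        exact le_abs_self _
      have : y₀ i * (A i j : ℝ) * y₀ j = (A i j : ℝ) * (y₀ i * y₀ j) := by ring
      rw [this, show x₀ i * (A i j : ℝ) * x₀ j = (A i j : ℝ) * (x₀ i * x₀ j) by ring]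
      exact mul_le_mul_of_nonpos_left habs hAij
  have hy₀min : qf A y₀ = c := le_antisymm hy₀le (hmin' _ hy₀S)
  -- the quadratic along direction u
  have hg : ∀ t : ℝ, 0 ≤ t * ((blR A y₀ u + blR A u y₀) - c * (2 * ∑ i, y₀ i * u i))
      + t ^ 2 * (qf A u - c * ∑ i, u i ^ 2) := by
    intro t
    have h0 := hscale (y₀ + t • u)
    rw [qf_expand, sq_sum_expand] at h0
    have hy1 : ∑ i, y₀ i ^ 2 = 1 := hy₀S
    rw [hy1] at h0
    nlinarith [h0, hy₀min]
  have ha : 0 ≤ qf A u - c * ∑ i, u i ^ 2 := by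
    have := hscale u; linarith
  have hb0 := quad_aux ha hg
  -- but the linear coefficient is strictly positive
  have hblR : blR A y₀ u = ∑ i, y₀ i * ∑ j, (A i j : ℝ) * u j := by
    unfold blR
    refine Finset.sum_congr rfl fun i _ => ?_
    rw [Finset.mul_sum]
    refine Finset.sum_congr rfl fun j _ => ?_; ring
  have hblR2 : blR A u y₀ = blR A y₀ u := by
    unfold blR
    rw [Finset.sum_comm]
    refine Finset.sum_congr rfl fun i _ => Finset.sum_congr rfl fun j _ => ?_
    rw [show A j i = A i j from hA.1.apply i j]; ring
  have hy₀nonneg : ∀ i, 0 ≤ y₀ i := fun i => abs_nonneg _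
  have hy₀ne : ∃ k, 0 < y₀ k := by
    by_contra h
    push_neg at h
    have : ∀ i, y₀ i = 0 := fun i => le_antisymm (h i) (hy₀nonneg i)
    have : ∑ i, y₀ i ^ 2 = 0 := by simp [this]
    rw [show (∑ i, y₀ i ^ 2) = 1 from hy₀S] at this
    norm_num at this
  obtain ⟨k, hk⟩ := hy₀ne
  have hpos1 : 0 < ∑ i, y₀ i * ∑ j, (A i j : ℝ) * u j := by
    refine Finset.sum_pos' (fun i _ => mul_nonneg (hy₀nonneg i) (hMu i).le)
      ⟨k, Finset.mem_univ k, mul_pos hk (hMu k)⟩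
  have hpos2 : 0 ≤ ∑ i, y₀ i * u i :=
    Finset.sum_nonneg fun i _ => mul_nonneg (hy₀nonneg i) (hu i).le
  have : 0 < (blR A y₀ u + blR A u y₀) - c * (2 * ∑ i, y₀ i * u i) := by
    rw [hblR2, hblR]
    nlinarith
  rw [hb0] at this
  exact lt_irrefl 0 this


/-- Positive definiteness bound (abbreviation). -/
def PDbound (c : ℝ) : Prop := ∀ x : ι → ℝ, c * ∑ i, x i ^ 2 ≤ qf A x

lemma bform_pos {c : ℝ} (hc : 0 < c) (hpd : PDbound A c) {β : ι → ℤ} (hβ : β ≠ 0) :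
    0 < bform A β β := by
  have h1 : (0:ℝ) < ((bform A β β : ℤ) : ℝ) := by
    rw [qf_cast]
    have h2 := hpd (fun i => (β i : ℝ))
    have h3 : ∃ i, β i ≠ 0 := by
      by_contra h; push_neg at h; exact hβ (funext h)
    obtain ⟨i, hi⟩ := h3
    have h4 : 0 < ∑ i, ((β i : ℝ)) ^ 2 := by
      refine Finset.sum_pos' (fun j _ => sq_nonneg _) ⟨i, Finset.mem_univ i, ?_⟩
      have : (β i : ℝ) ≠ 0 := Int.cast_ne_zero.2 hi
      positivity
    calc (0:ℝ) < c * ∑ i, ((β i : ℝ)) ^ 2 := mul_pos hc h4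
    _ ≤ qf A (fun i => (β i : ℝ)) := h2
  exact_mod_cast h1

lemma norm2_finite {c : ℝ} (hc : 0 < c) (hpd : PDbound A c) :
    {β : ι → ℤ | bform A β β = 2}.Finite := by
  obtain ⟨N, hN⟩ := exists_nat_ge (2 / c)
  have hbd : ∀ β : ι → ℤ, bform A β β = 2 → ∀ i, β i ∈ Finset.Icc (-(N:ℤ)) (N:ℤ) := by
    intro β hβ i
    have h2 : qf A (fun i => (β i : ℝ)) = 2 := by rw [← qf_cast, hβ]; norm_num
    have h3 := hpd (fun i => (β i : ℝ))
    rw [h2] at h3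
    have h4 : ((β i : ℝ)) ^ 2 ≤ ∑ j, ((β j : ℝ)) ^ 2 :=
      Finset.single_le_sum (f := fun j => ((β j : ℝ)) ^ 2) (fun j _ => sq_nonneg _)
        (Finset.mem_univ i)
    have h5 : ((β i : ℝ)) ^ 2 ≤ 2 / c := by
      rw [le_div_iff₀ hc, mul_comm]
      calc c * (β i : ℝ) ^ 2 ≤ c * ∑ j, ((β j : ℝ)) ^ 2 :=
        mul_le_mul_of_nonneg_left h4 hc.le
      _ ≤ 2 := h3
    rw [Finset.mem_Icc]
    by_contra hcon
    have habs : (N:ℤ) + 1 ≤ |β i| := by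
      rw [not_and_or] at hcon
      rcases hcon with h | h
      · push_neg at h
        have : β i ≤ -(N:ℤ) - 1 := by omega
        calc (N:ℤ) + 1 ≤ -(β i) := by omega
        _ ≤ |β i| := neg_le_abs _
      · push_neg at h
        calc (N:ℤ) + 1 ≤ β i := by omega
        _ ≤ |β i| := le_abs_self _
    have habsR : ((N:ℝ) + 1) ≤ |(β i : ℝ)| := by
      have := habs
      rw [← Int.cast_abs]
      exact_mod_cast (by exact_mod_cast habs : ((N:ℤ):ℝ) + 1 ≤ ((|β i| : ℤ) : ℝ))
    have hsq : ((N:ℝ) + 1) ^ 2 ≤ (β i : ℝ) ^ 2 := by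
      rw [← sq_abs (β i : ℝ)]
      exact pow_le_pow_left₀ (by positivity) habsR 2
    have hN1 : (N:ℝ) + 1 ≤ ((N:ℝ) + 1) ^ 2 := by nlinarith [Nat.cast_nonneg (α := ℝ) N]
    have : (N:ℝ) < 2 / c := by linarith
    linarith
  refine Set.Finite.subset (Set.Finite.pi (fun _ : ι =>
    (Finset.Icc (-(N:ℤ)) (N:ℤ)).finite_toSet)) ?_
  intro β hβ
  rw [Set.mem_pi]
  intro i _
  exact hbd β hβ i

lemma sroot_mem_roots (hA : IsGCM A) (i : ι) : sroot i ∈ realRoots A hA :=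
  ⟨1, (weylGroup A hA).one_mem, i, rfl⟩

lemma roots_norm2 (hA : IsGCM A) {β : ι → ℤ} (hβ : β ∈ realRoots A hA) :
    bform A β β = 2 := by
  obtain ⟨w, hw, i, rfl⟩ := hβ
  rw [weyl_bform A hA hw, bform_sroot_sroot]
  exact hA.2.1 i

lemma roots_w (hA : IsGCM A) {w : (ι → ℤ) ≃ₗ[ℤ] (ι → ℤ)} (hw : w ∈ weylGroup A hA)
    {β : ι → ℤ} (hβ : β ∈ realRoots A hA) : w β ∈ realRoots A hA := by
  obtain ⟨w', hw', i, rfl⟩ := hβ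
  exact ⟨w * w', (weylGroup A hA).mul_mem hw hw', i, rfl⟩

lemma srefl_sroot_self (hA : IsGCM A) (i : ι) : srefl A hA i (sroot i) = -sroot i := by
  rw [srefl_apply, bform_sroot_sroot, hA.2.1 i]
  module

lemma roots_neg (hA : IsGCM A) {β : ι → ℤ} (hβ : β ∈ realRoots A hA) :
    -β ∈ realRoots A hA := by
  obtain ⟨w, hw, i, rfl⟩ := hβ
  refine ⟨w * srefl A hA i, (weylGroup A hA).mul_mem hw (srefl_mem A hA i), i, ?_⟩
  show -(w (sroot i)) = w (srefl A hA i (sroot i))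
  rw [srefl_sroot_self A hA, map_neg]

lemma roots_nonzero (hA : IsGCM A) {β : ι → ℤ} (hβ : β ∈ realRoots A hA) : β ≠ 0 := by
  intro h
  have := roots_norm2 A hA hβ
  rw [h] at this
  simp [bform] at this

/-- Sign-definiteness. -/
def SDvec (β : ι → ℤ) : Prop := (∀ j, 0 ≤ β j) ∨ (∀ j, β j ≤ 0)

lemma sroot_apply (i j : ι) : sroot i j = if j = i then 1 else 0 := Pi.single_apply i 1 j

lemma step_lemma {c : ℝ} (hc : 0 < c) (hpd : PDbound A c) (hA : IsGCM A) {β : ι → ℤ}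
    (h2 : bform A β β = 2) (hpos : ∀ j, 0 ≤ β j) (i : ι) :
    (∀ j, 0 ≤ srefl A hA i β j) ∨ β = sroot i := by
  set b := bform A β (sroot i) with hb
  have happ : ∀ j, srefl A hA i β j = β j - b * (if j = i then 1 else 0) := by
    intro j
    rw [srefl_apply]
    simp only [Pi.sub_apply, Pi.smul_apply, smul_eq_mul, sroot_apply]
    rw [← hb]
  rcases le_or_gt b 0 with hble | hbpos
  · left
    intro j
    rw [happ j]
    by_cases hj : j = i
    · subst hj
      rw [if_pos rfl, mul_one]
      linarith [hpos j, hble]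
    · rw [if_neg hj, mul_zero, sub_zero]
      exact hpos j
  · rcases (by omega : b = 1 ∨ 2 ≤ b) with hb1 | hb2
    · -- b = 1 : then β i ≥ 1, or β i = 0 which is impossible
      have hcases : 1 ≤ β i ∨ β i = 0 := by have := hpos i; omega
      rcases hcases with hge | heq
      case inl =>
        left
        intro j
        rw [happ j]
        by_cases hj : j = i
        · subst hj; rw [if_pos rfl, hb1]; omega
        · rw [if_neg hj]; simpa using hpos j
      case inr =>
        exfalso
        have hsum : b = ∑ j, β j * A j i := by
          rw [hb, bform_sroot_right]; rfl
        have hle : (∑ j, β j * A j i) ≤ 0 := by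
          refine Finset.sum_nonpos fun j _ => ?_
          by_cases hj : j = i
          · subst hj; rw [heq]; simp
          · exact mul_nonpos_of_nonneg_of_nonpos (hpos j) (hA.2.2 j i hj)
        omega
    · -- 2 ≤ b : then β = sroot i
      right
      have hnorm : bform A (β - sroot i) (β - sroot i) = 4 - 2 * b := by
        rw [bform_sub_left A hA, bform_sub_right, bform_sub_right, h2, bform_sroot_sroot,
          hA.2.1 i, ← hb, bform_comm A hA (sroot i) β, ← hb]
        ring
      have hz : β - sroot i = 0 := by
        by_contra hne
        have := bform_pos A hc hpd hne
        omega
      have := sub_eq_zero.mp hz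
      exact this

lemma step_SD {c : ℝ} (hc : 0 < c) (hpd : PDbound A c) (hA : IsGCM A) {β : ι → ℤ}
    (h2 : bform A β β = 2) (hSD : SDvec β) (i : ι) : SDvec (srefl A hA i β) := by
  rcases hSD with hp | hn
  · rcases step_lemma A hc hpd hA h2 hp i with h | h
    · exact Or.inl h
    · subst h
      right
      intro j
      rw [srefl_sroot_self A hA]
      simp only [Pi.neg_apply, sroot_apply]
      split <;> norm_num
  · have h2' : bform A (-β) (-β) = 2 := by
      rw [bform_neg_right, bform_comm A hA, bform_neg_right, bform_comm A hA, h2]; ring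
    have hp' : ∀ j, 0 ≤ (-β) j := fun j => by simpa using hn j
    rcases step_lemma A hc hpd hA h2' hp' i with h | h
    · right
      intro j
      have := h j
      rw [map_neg] at this
      simpa using this
    · left
      intro j
      have hβ : β = -sroot i := by
        have := congrArg Neg.neg h
        simpa using this
      rw [hβ, map_neg, srefl_sroot_self A hA]
      simp only [neg_neg]
      rw [sroot_apply]
      split <;> norm_num

lemma prod_simple_SD {co : ℝ} (hc : 0 < co) (hpd : PDbound A co) (hA : IsGCM A)
    (l : List ι) (i : ι) : SDvec (prodW A hA l (sroot i)) := by
  induction l with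
  | nil =>
      left
      intro j
      rw [prodW_nil]
      show (0:ℤ) ≤ sroot i j
      rw [sroot_apply]
      split <;> norm_num
  | cons k l ih =>
      rw [prodW_cons]
      have h2 : bform A (prodW A hA l (sroot i)) (prodW A hA l (sroot i)) = 2 := by
        rw [weyl_bform A hA (prodW_mem A hA l), bform_sroot_sroot]
        exact hA.2.1 i
      show SDvec (srefl A hA k (prodW A hA l (sroot i)))
      exact step_SD A hc hpd hA h2 ih k

lemma roots_SD {co : ℝ} (hc : 0 < co) (hpd : PDbound A co) (hA : IsGCM A)
    {β : ι → ℤ} (hβ : β ∈ realRoots A hA) : SDvec β := by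
  obtain ⟨w, hw, i, rfl⟩ := hβ
  obtain ⟨l, rfl⟩ := (mem_weylGroup_iff_list A hA w).1 hw
  exact prod_simple_SD A hc hpd hA l i


lemma rroot_congr (hA : IsGCM A) {β β' : ι → ℤ} (h : β = β') (h2 : bform A β β = 2) :
    rroot A hA β h2 = rroot A hA β' (h ▸ h2) := by cases h; rfl

lemma step_force {co : ℝ} (hc : 0 < co) (hpd : PDbound A co) (hA : IsGCM A) {γ : ι → ℤ}
    (h2 : bform A γ γ = 2) (hp : ∀ j, 0 ≤ γ j) {i : ι}
    (hneg : ∀ j, srefl A hA i γ j ≤ 0) : γ = sroot i := by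
  rcases step_lemma A hc hpd hA h2 hp i with h | h
  · exfalso
    have hz : srefl A hA i γ = 0 := funext fun j => le_antisymm (hneg j) (h j)
    have hγz : γ = 0 := by
      have := (srefl A hA i).injective (by rw [hz, map_zero] : srefl A hA i γ = srefl A hA i 0)
      exact this
    rw [hγz] at h2
    simp [bform] at h2
  · exact h

lemma exchange {co : ℝ} (hc : 0 < co) (hpd : PDbound A co) (hA : IsGCM A) :
    ∀ (l : List ι) (β : ι → ℤ), β ∈ realRoots A hA → ∀ (h2 : bform A β β = 2),
      (∀ j, 0 ≤ β j) → (∀ j, prodW A hA l β j ≤ 0) →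
      ∃ l' : List ι, l'.length + 1 = l.length ∧
        prodW A hA l' = prodW A hA l * rroot A hA β h2 := by
  intro l
  induction l with
  | nil =>
      intro β hβ h2 hpos hneg
      exfalso
      have hz : β = 0 := by
        funext j
        have h1 := hneg j
        rw [prodW_nil] at h1
        exact le_antisymm h1 (hpos j)
      rw [hz] at h2
      simp [bform] at h2
  | cons i l ih =>
      intro β hβ h2 hpos hneg
      set w := prodW A hA l with hw
      have hwmem := prodW_mem A hA l
      set γ := w β with hγdef
      have hγroot : γ ∈ realRoots A hA := roots_w A hA hwmem hβ
      have hγ2 : bform A γ γ = 2 := roots_norm2 A hA hγroot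
      have happ : ∀ j, prodW A hA (i :: l) β j = srefl A hA i γ j := by
        intro j
        rw [prodW_cons]
        rfl
      rcases roots_SD A hc hpd hA hγroot with hγpos | hγneg
      · -- γ ≥ 0 : forced γ = sroot i, delete the head
        have hγi : γ = sroot i := by
          refine step_force A hc hpd hA hγ2 hγpos ?_
          intro j
          rw [← happ j]
          exact hneg j
        refine ⟨l, by simp, ?_⟩
        have hconj := rroot_conj A hA hwmem β h2
        have hsr : rroot A hA (w β) (by rw [weyl_bform A hA hwmem]; exact h2)
            = srefl A hA i := by
          rw [rroot_congr A hA (show w β = sroot i from hγi)]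
          exact (srefl_eq_rroot A hA i).symm
        rw [hsr] at hconj
        -- hconj : w * rroot β * w⁻¹ = srefl i
        have h4 : w * rroot A hA β h2 = srefl A hA i * w := by
          have := congrArg (fun g => g * w) hconj
          simpa [mul_assoc, hw] using this
        rw [prodW_cons, mul_assoc, h4, ← mul_assoc, srefl_mul_self A hA, one_mul]
      · -- γ ≤ 0 : use the induction hypothesis
        obtain ⟨l', hlen, hprod⟩ := ih β hβ h2 hpos hγneg
        refine ⟨i :: l', by simpa using hlen, ?_⟩
        rw [prodW_cons, prodW_cons, hprod, mul_assoc]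

lemma pi_decomp (x : ι → ℤ) : (∑ k, x k • sroot k) = x := by
  funext j
  rw [Finset.sum_apply]
  rw [Finset.sum_eq_single j]
  · simp [sroot]
  · intro b _ hb
    simp [sroot, Pi.single_apply, Ne.symm hb]
  · simp

lemma apply_coords_nonneg (hA : IsGCM A) (w : (ι → ℤ) ≃ₗ[ℤ] (ι → ℤ))
    (hcoords : ∀ i j, 0 ≤ w (sroot i) j) (x : ι → ℤ) (hx : ∀ j, 0 ≤ x j) :
    ∀ j, 0 ≤ w x j := by
  intro j
  have hd : w x = ∑ k, x k • w (sroot k) := by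
    conv_lhs => rw [← pi_decomp x]
    rw [map_sum]
    refine Finset.sum_congr rfl fun k _ => ?_
    rw [map_smul]
  rw [hd, Finset.sum_apply]
  refine Finset.sum_nonneg fun k _ => ?_
  have : (x k • w (sroot k)) j = x k * w (sroot k) j := rfl
  rw [this]
  exact mul_nonneg (hx k) (hcoords k j)

lemma stab_aux {co : ℝ} (hc : 0 < co) (hpd : PDbound A co) (hA : IsGCM A) :
    ∀ (n : ℕ) (l : List ι), l.length ≤ n →
      (∀ i j, 0 ≤ (prodW A hA l) (sroot i) j) → prodW A hA l = 1 := by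
  intro n
  induction n with
  | zero =>
      intro l hl _
      rw [List.length_eq_zero_iff.1 (Nat.le_zero.1 hl)]
      rfl
  | succ n ihn =>
      intro l hl hcoords
      match l with
      | [] => rfl
      | i :: l' =>
        set w := prodW A hA (i :: l') with hwdef
        have hwmem : w ∈ weylGroup A hA := prodW_mem A hA _
        set β₀ := w⁻¹ (sroot i) with hβ₀def
        have hβ₀root : β₀ ∈ realRoots A hA :=
          ⟨w⁻¹, (weylGroup A hA).inv_mem hwmem, i, rfl⟩
        have hβ₀2 : bform A β₀ β₀ = 2 := roots_norm2 A hA hβ₀root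
        have hwβ₀ : w β₀ = sroot i := w.apply_symm_apply (sroot i)
        have hβ₀ne : β₀ ≠ 0 := roots_nonzero A hA hβ₀root
        have hβ₀pos : ∀ j, 0 ≤ β₀ j := by
          rcases roots_SD A hc hpd hA hβ₀root with h | h
          · exact h
          · exfalso
            have hneg : ∀ j, 0 ≤ (-β₀) j := fun j => by simpa using h j
            have := apply_coords_nonneg A hA w hcoords (-β₀) hneg i
            rw [map_neg, hwβ₀] at this
            simp [sroot] at this
        -- the tail
        set w' := prodW A hA l' with hw'def
        have hww' : w = srefl A hA i * w' := prodW_cons A hA i l'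
        have hw'β₀ : ∀ j, w' β₀ j ≤ 0 := by
          have h5 : w' = srefl A hA i * w := by
            rw [hww', ← mul_assoc, srefl_mul_self A hA, one_mul]
          intro j
          have : w' β₀ = srefl A hA i (w β₀) := by rw [h5]; rfl
          rw [this, hwβ₀, srefl_sroot_self A hA]
          simp only [Pi.neg_apply, sroot_apply]
          split <;> norm_num
        obtain ⟨l'', hlen, hprod⟩ := exchange A hc hpd hA l' β₀ hβ₀root hβ₀2 hβ₀pos hw'β₀
        -- w' * rroot β₀ = w
        have hconj := rroot_conj A hA hwmem β₀ hβ₀2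
        have hsr : rroot A hA (w β₀) (by rw [weyl_bform A hA hwmem]; exact hβ₀2)
            = srefl A hA i := by
          rw [rroot_congr A hA (show w β₀ = sroot i from hwβ₀)]
          exact (srefl_eq_rroot A hA i).symm
        rw [hsr] at hconj
        have h4 : w * rroot A hA β₀ hβ₀2 = srefl A hA i * w := by
          have := congrArg (fun g => g * w) hconj
          simpa [mul_assoc] using this
        have h6 : prodW A hA l'' = w := by
          rw [hprod]
          have h7 : srefl A hA i * (w' * rroot A hA β₀ hβ₀2) = srefl A hA i * w := by
            rw [← mul_assoc, ← hww', h4, hww']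
          exact mul_left_cancel h7
        have hlen2 : l''.length ≤ n := by
          have : l'.length + 1 = (i :: l').length := rfl
          simp only [List.length_cons] at hl
          omega
        have := ihn l'' hlen2 (by rw [h6]; exact hcoords)
        rw [← h6, this]


lemma weyl_finite {co : ℝ} (hc : 0 < co) (hpd : PDbound A co) (hA : IsGCM A) :
    ((weylGroup A hA : Set ((ι → ℤ) ≃ₗ[ℤ] (ι → ℤ)))).Finite := by
  classical
  have hRS : {β : ι → ℤ | bform A β β = 2}.Finite := norm2_finite A hc hpd
  have hpi : (Set.univ.pi fun _ : ι => {β : ι → ℤ | bform A β β = 2}).Finite :=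
    Set.Finite.pi fun _ => hRS
  apply Set.Finite.of_finite_image (f := fun w => (fun i => w (sroot i)))
  · refine hpi.subset ?_
    rintro _ ⟨w, hw, rfl⟩
    rw [Set.mem_pi]
    intro i _
    exact roots_norm2 A hA ⟨w, hw, i, rfl⟩
  · intro w1 h1 w2 h2 heq
    apply LinearEquiv.toLinearMap_injective
    apply LinearMap.ext
    intro x
    show w1 x = w2 x
    conv_lhs => rw [← pi_decomp x, map_sum]
    conv_rhs => rw [← pi_decomp x, map_sum]
    refine Finset.sum_congr rfl fun k _ => ?_
    rw [map_smul, map_smul, show w1 (sroot k) = w2 (sroot k) from congrFun heq k]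

/-- Pairing of a real covector with a lattice vector. -/
def pr (Z : ι → ℝ) (β : ι → ℤ) : ℝ := ∑ m, Z m * (β m : ℝ)

lemma pr_sub (Z : ι → ℝ) (x y : ι → ℤ) : pr Z (x - y) = pr Z x - pr Z y := by
  unfold pr
  rw [← Finset.sum_sub_distrib]
  refine Finset.sum_congr rfl fun m _ => ?_
  simp only [Pi.sub_apply]
  push_cast
  ring

lemma pr_zsmul (Z : ι → ℝ) (c : ℤ) (x : ι → ℤ) : pr Z (c • x) = (c : ℝ) * pr Z x := by
  unfold pr
  rw [Finset.mul_sum]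
  refine Finset.sum_congr rfl fun m _ => ?_
  simp only [Pi.smul_apply, smul_eq_mul]
  push_cast
  ring

lemma pr_pos {Y : ι → ℝ} (hY : ∀ i, 0 < Y i) {β : ι → ℤ} (hβ : ∀ j, 0 ≤ β j)
    (hβne : β ≠ 0) : 0 < pr Y β := by
  have h3 : ∃ k, β k ≠ 0 := by
    by_contra h; push_neg at h; exact hβne (funext h)
  obtain ⟨k, hk⟩ := h3
  refine Finset.sum_pos' (fun m _ => mul_nonneg (hY m).le (by exact_mod_cast hβ m))
    ⟨k, Finset.mem_univ k, ?_⟩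
  have hbk : 0 < β k := lt_of_le_of_ne (hβ k) (Ne.symm hk)
  exact mul_pos (hY k) (by exact_mod_cast hbk)

lemma pr_neg_of {Y : ι → ℝ} (hY : ∀ i, 0 < Y i) {β : ι → ℤ} (hβ : ∀ j, β j ≤ 0)
    (hβne : β ≠ 0) : pr Y β < 0 := by
  have h1 : 0 < pr Y (-β) := pr_pos hY (fun j => by simpa using hβ j)
    (fun h => hβne (by simpa using congrArg Neg.neg h))
  have h2 : pr Y (-β) = -pr Y β := by
    unfold pr
    rw [← Finset.sum_neg_distrib]
    refine Finset.sum_congr rfl fun m _ => ?_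
    simp only [Pi.neg_apply]
    push_cast; ring
  rw [h2] at h1
  linarith

lemma actR_eq_pr (w : (ι → ℤ) ≃ₗ[ℤ] (ι → ℤ)) (Z : ι → ℝ) (i : ι) :
    actR w Z i = pr Z (w.symm (sroot i)) := rfl

lemma pr_actR (w : (ι → ℤ) ≃ₗ[ℤ] (ι → ℤ)) (Y : ι → ℝ) (β : ι → ℤ) :
    pr (actR w Y) β = pr Y (w.symm β) := by
  conv_rhs => rw [← pi_decomp β]
  rw [map_sum]
  have h1 : pr Y (∑ k, w.symm (β k • sroot k)) = ∑ k, pr Y (w.symm (β k • sroot k)) := by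
    unfold pr
    rw [Finset.sum_comm]
    refine Finset.sum_congr rfl fun m _ => ?_
    rw [← Finset.mul_sum]
    congr 1
    rw [Finset.sum_apply]
    push_cast
    rfl
  rw [h1]
  show ∑ m, (actR w Y) m * (β m : ℝ) = _
  refine Finset.sum_congr rfl fun m _ => ?_
  rw [map_smul, pr_zsmul, actR_eq_pr]
  ring


lemma actR_srefl_mul (hA : IsGCM A) (k : ι) (w : (ι → ℤ) ≃ₗ[ℤ] (ι → ℤ)) (Z : ι → ℝ)
    (j : ι) :
    actR (srefl A hA k * w) Z j = actR w Z j - (A j k : ℝ) * actR w Z k := by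
  have h0 : (srefl A hA k * w).symm (sroot j)
      = w.symm (srefl A hA k (sroot j)) := by
    show ((srefl A hA k * w)⁻¹ : (ι → ℤ) ≃ₗ[ℤ] (ι → ℤ)) (sroot j) = _
    rw [mul_inv_rev, srefl_inv]
    rfl
  have h1 : srefl A hA k (sroot j) = sroot j - A j k • sroot k := by
    rw [srefl_apply, bform_sroot_sroot]
  rw [actR_eq_pr, h0, h1, map_sub, map_smul, pr_sub, pr_zsmul, actR_eq_pr, actR_eq_pr]

lemma apply_coords_nonpos (w : (ι → ℤ) ≃ₗ[ℤ] (ι → ℤ))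
    (hcoords : ∀ i j, w (sroot i) j ≤ 0) (x : ι → ℤ) (hx : ∀ j, 0 ≤ x j) :
    ∀ j, w x j ≤ 0 := by
  intro j
  have hd : w x = ∑ k, x k • w (sroot k) := by
    conv_lhs => rw [← pi_decomp x]
    rw [map_sum]
    refine Finset.sum_congr rfl fun k _ => ?_
    rw [map_smul]
  rw [hd, Finset.sum_apply]
  refine Finset.sum_nonpos fun k _ => ?_
  have : (x k • w (sroot k)) j = x k * w (sroot k) j := rfl
  rw [this]
  exact mul_nonpos_of_nonneg_of_nonpos (hx k) (hcoords k j)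

lemma stab_weyl {co : ℝ} (hc : 0 < co) (hpd : PDbound A co) (hA : IsGCM A)
    {g : (ι → ℤ) ≃ₗ[ℤ] (ι → ℤ)} (hg : g ∈ weylGroup A hA)
    (hcoords : ∀ i j, 0 ≤ g (sroot i) j) : g = 1 := by
  obtain ⟨l, rfl⟩ := (mem_weylGroup_iff_list A hA g).1 hg
  exact stab_aux A hc hpd hA l.length l le_rfl hcoords

theorem main_aux (hA : IsGCM A) (hne : Nonempty ι) (hfin : IsFiniteType A)
    (Z : ι → ℝ) (hZ : Z ∈ titsConeReg A hA) :
    ∃! w : (ι → ℤ) ≃ₗ[ℤ] (ι → ℤ), w ∈ weylGroup A hA ∧ ∀ i, actR w Z i < 0 := by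
  classical
  obtain ⟨u, hu, hAu⟩ := hfin.2.1
  have hMu : ∀ i, 0 < ∑ j, (A i j : ℝ) * u j := by
    intro i
    have := hAu i
    simpa [Matrix.mulVec, dotProduct, Matrix.map_apply] using this
  obtain ⟨c, hc, hpd⟩ := posdef_bound A hA u hu hMu
  have hpd' : PDbound A c := hpd
  -- unpack Z
  simp only [titsConeReg, Set.mem_iUnion, Set.mem_image] at hZ
  obtain ⟨w₀, hw₀, Y, hY, rfl⟩ := hZ
  have hYpos : ∀ i, 0 < Y i := hY
  -- evaluation of the action through the chamber point
  have heval : ∀ (w : (ι → ℤ) ≃ₗ[ℤ] (ι → ℤ)) (k : ι),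
      actR w (actR w₀ Y) k = pr Y ((w₀⁻¹ * w⁻¹ : (ι → ℤ) ≃ₗ[ℤ] (ι → ℤ)) (sroot k)) := by
    intro w k
    rw [actR_eq_pr, pr_actR]
    rfl
  have hvmem : ∀ {w : (ι → ℤ) ≃ₗ[ℤ] (ι → ℤ)}, w ∈ weylGroup A hA →
      (w₀⁻¹ * w⁻¹ : (ι → ℤ) ≃ₗ[ℤ] (ι → ℤ)) ∈ weylGroup A hA := fun hw =>
    (weylGroup A hA).mul_mem ((weylGroup A hA).inv_mem hw₀) ((weylGroup A hA).inv_mem hw)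
  -- sign dichotomy for the coordinates
  have hsign : ∀ {w : (ι → ℤ) ≃ₗ[ℤ] (ι → ℤ)}, w ∈ weylGroup A hA → ∀ k,
      (actR w (actR w₀ Y) k < 0 ↔ ∀ j, (w₀⁻¹ * w⁻¹ : (ι → ℤ) ≃ₗ[ℤ] (ι → ℤ)) (sroot k) j ≤ 0) := by
    intro w hw k
    set v := (w₀⁻¹ * w⁻¹ : (ι → ℤ) ≃ₗ[ℤ] (ι → ℤ)) with hv
    have hvroot : v (sroot k) ∈ realRoots A hA := ⟨v, hvmem hw, k, rfl⟩
    have hvne : v (sroot k) ≠ 0 := roots_nonzero A hA hvroot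
    rw [heval w k]
    constructor
    · intro hlt
      rcases roots_SD A hc hpd' hA hvroot with h | h
      · exfalso
        have := pr_pos hYpos h hvne
        linarith
      · exact h
    · intro h
      exact pr_neg_of hYpos h hvne
  -- existence by minimisation
  have hex : ∃ wm ∈ weylGroup A hA, ∀ k, actR wm (actR w₀ Y) k < 0 := by
    obtain ⟨wm, hwm, hmin⟩ := Set.exists_min_image
      (weylGroup A hA : Set ((ι → ℤ) ≃ₗ[ℤ] (ι → ℤ)))
      (fun w => ∑ j, u j * actR w (actR w₀ Y) j)
      (weyl_finite A hc hpd' hA) ⟨1, (weylGroup A hA).one_mem⟩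
    refine ⟨wm, hwm, ?_⟩
    intro k
    have hmem2 : srefl A hA k * wm ∈ weylGroup A hA :=
      (weylGroup A hA).mul_mem (srefl_mem A hA k) hwm
    have hle := hmin _ hmem2
    have hexp : ∑ j, u j * actR (srefl A hA k * wm) (actR w₀ Y) j
        = ∑ j, u j * actR wm (actR w₀ Y) j
          - (∑ j, u j * (A j k : ℝ)) * actR wm (actR w₀ Y) k := by
      rw [Finset.sum_mul, ← Finset.sum_sub_distrib]
      refine Finset.sum_congr rfl fun j _ => ?_
      rw [actR_srefl_mul A hA k wm]
      ring
    rw [hexp] at hle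
    have hSk : 0 < ∑ j, u j * (A j k : ℝ) := by
      have h7 : ∑ j, u j * (A j k : ℝ) = ∑ j, (A k j : ℝ) * u j := by
        refine Finset.sum_congr rfl fun j _ => ?_
        rw [show A j k = A k j from hA.1.apply k j]
        ring
      rw [h7]
      exact hMu k
    have hYk : actR wm (actR w₀ Y) k ≤ 0 := by nlinarith
    rcases lt_or_eq_of_le hYk with h | h
    · exact h
    · exfalso
      set v := (w₀⁻¹ * wm⁻¹ : (ι → ℤ) ≃ₗ[ℤ] (ι → ℤ)) with hv
      have hvroot : v (sroot k) ∈ realRoots A hA := ⟨v, hvmem hwm, k, rfl⟩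
      have hvne : v (sroot k) ≠ 0 := roots_nonzero A hA hvroot
      have h0 : pr Y (v (sroot k)) = 0 := by rw [← heval wm k, ← h]
      rcases roots_SD A hc hpd' hA hvroot with hsd | hsd
      · have := pr_pos hYpos hsd hvne; linarith
      · have := pr_neg_of hYpos hsd hvne; linarith
  -- uniqueness
  have huniq : ∀ w1 w2 : (ι → ℤ) ≃ₗ[ℤ] (ι → ℤ), w1 ∈ weylGroup A hA → w2 ∈ weylGroup A hA →
      (∀ k, actR w1 (actR w₀ Y) k < 0) → (∀ k, actR w2 (actR w₀ Y) k < 0) → w1 = w2 := by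
    intro w1 w2 h1 h2 hn1 hn2
    set v1 := (w₀⁻¹ * w1⁻¹ : (ι → ℤ) ≃ₗ[ℤ] (ι → ℤ)) with hv1
    set v2 := (w₀⁻¹ * w2⁻¹ : (ι → ℤ) ≃ₗ[ℤ] (ι → ℤ)) with hv2
    have hc1 : ∀ k j, v1 (sroot k) j ≤ 0 := fun k => (hsign h1 k).1 (hn1 k)
    have hc2 : ∀ k j, v2 (sroot k) j ≤ 0 := fun k => (hsign h2 k).1 (hn2 k)
    have hv1mem : v1 ∈ weylGroup A hA := hvmem h1
    have hv2mem : v2 ∈ weylGroup A hA := hvmem h2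
    set g := (v1⁻¹ * v2 : (ι → ℤ) ≃ₗ[ℤ] (ι → ℤ)) with hg
    have hgmem : g ∈ weylGroup A hA :=
      (weylGroup A hA).mul_mem ((weylGroup A hA).inv_mem hv1mem) hv2mem
    have hgpos : ∀ k j, 0 ≤ g (sroot k) j := by
      intro k
      have hgroot : g (sroot k) ∈ realRoots A hA := ⟨g, hgmem, k, rfl⟩
      rcases roots_SD A hc hpd' hA hgroot with h | h
      · exact h
      · exfalso
        have hx : ∀ j, 0 ≤ (-(g (sroot k))) j := fun j => by simpa using h j
        have h5 : ∀ j, v1 (-(g (sroot k))) j ≤ 0 :=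
          apply_coords_nonpos v1 hc1 _ hx
        have h6 : v1 (g (sroot k)) = v2 (sroot k) := by
          show v1 (v1⁻¹ (v2 (sroot k))) = v2 (sroot k)
          exact v1.apply_symm_apply _
        have h7 : ∀ j, 0 ≤ v2 (sroot k) j := by
          intro j
          have := h5 j
          rw [map_neg] at this
          rw [← h6]
          simpa using this
        have hvne : v2 (sroot k) ≠ 0 := roots_nonzero A hA ⟨v2, hv2mem, k, rfl⟩
        apply hvne
        funext j
        exact le_antisymm (hc2 k j) (h7 j)
    have hg1 : g = 1 := stab_weyl A hc hpd' hA hgmem hgpos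
    have hv12 : v1 = v2 := by
      have h9 : v1 * g = v1 * 1 := congrArg (fun x => v1 * x) hg1
      rw [hg, mul_one, ← mul_assoc, mul_inv_cancel, one_mul] at h9
      exact h9.symm
    have h8 : w1⁻¹ = w2⁻¹ := mul_left_cancel (hv1 ▸ hv2 ▸ hv12)
    exact inv_injective h8
  obtain ⟨wm, hwm, hneg⟩ := hex
  refine ⟨wm, ⟨hwm, hneg⟩, ?_⟩
  rintro w' ⟨hw', hneg'⟩
  exact huniq w' wm hw' hwm hneg' hneg

end Aux

/-- for an indecomposable GCM of finite type, every `Z` in the regular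
Tits cone has a unique `w ∈ W` with `(w·Z)(α_i) < 0` for all `i`. -/
theorem finiteType_unique_weyl_to_negative_chamber (A : Matrix ι ι ℤ) (hA : IsGCM A)
    (hconn : (dynkin A).Connected) (hfin : IsFiniteType A)
    (Z : ι → ℝ) (hZ : Z ∈ titsConeReg A hA) :
    ∃! w : (ι → ℤ) ≃ₗ[ℤ] (ι → ℤ), w ∈ weylGroup A hA ∧ ∀ i, actR w Z i < 0 :=
  main_aux A hA hconn.nonempty hfin Z hZ

end KacMoodyStab
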